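/- Let f(x) = (1/√(2π))·exp(-x²/2) be the standard normal density and Q(x) = ∫_x^∞ f(t) dt its tail function. Then for all real x, Q(x)/(2f(x)) > 1/(x + √(x²+4)). -/

import Mathlib

open Real MeasureTheory Set

noncomputable def stdNormalPdf (x : ℝ) : ℝ := (Real.sqrt (2 * Real.pi))⁻¹ * Real.exp (-x ^ 2 / 2)

noncomputable def gaussQ (x : ℝ) : ℝ := ∫ t in Set.Ici x, stdNormalPdf t

noncomputable def gaussPhi (x : ℝ) : ℝ := ∫ t in Set.Iic x, stdNormalPdf t

lemma pdf_pos (x : ℝ) : 0 < stdNormalPdf x := by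
  unfold stdNormalPdf
  positivity

lemma pdf_cont : Continuous stdNormalPdf := by
  unfold stdNormalPdf
  fun_prop

lemma pdf_integrable : Integrable stdNormalPdf := by
  have h := (integrable_exp_neg_mul_sq (show (0:ℝ) < 1/2 by norm_num)).const_mul
    ((Real.sqrt (2 * Real.pi))⁻¹)
  convert h using 2 with t
  unfold stdNormalPdf
  ring_nf

lemma pdf_hasDeriv (x : ℝ) : HasDerivAt stdNormalPdf (-x * stdNormalPdf x) x := by
  have h1 : HasDerivAt (fun y : ℝ => -y ^ 2 / 2) (-x) x := by
    have h := (hasDerivAt_pow 2 x).neg.div_const 2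
    refine h.congr_deriv ?_
    norm_num
    ring
  have h2 := h1.exp
  have h3 := h2.const_mul ((Real.sqrt (2 * Real.pi))⁻¹)
  unfold stdNormalPdf
  refine h3.congr_deriv ?_
  ring

lemma Q_sub (a b : ℝ) : gaussQ b = gaussQ a - ∫ t in a..b, stdNormalPdf t := by
  have hi := pdf_integrable
  have hIci : ∀ c : ℝ, gaussQ c = (∫ t, stdNormalPdf t) - gaussPhi c := by
    intro c
    have := intervalIntegral.integral_Iic_add_Ioi (μ := volume) (hi.integrableOn) (hi.integrableOn)
      (b := c) (f := stdNormalPdf)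
    have h2 : gaussQ c = ∫ t in Ioi c, stdNormalPdf t :=
      integral_Ici_eq_integral_Ioi
    unfold gaussPhi
    linarith [this, h2]
  have hsub : gaussPhi b - gaussPhi a = ∫ t in a..b, stdNormalPdf t :=
    intervalIntegral.integral_Iic_sub_Iic hi.integrableOn hi.integrableOn
  rw [hIci a, hIci b]
  linarith [hsub]

lemma Q_hasDeriv (x : ℝ) : HasDerivAt gaussQ (-(stdNormalPdf x)) x := by
  have hfun : gaussQ = fun y => gaussQ 0 - ∫ t in (0:ℝ)..y, stdNormalPdf t := by
    funext y; exact Q_sub 0 y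
  have hd : HasDerivAt (fun y => ∫ t in (0:ℝ)..y, stdNormalPdf t) (stdNormalPdf x) x := by
    refine intervalIntegral.integral_hasDerivAt_right
      pdf_integrable.intervalIntegrable
      pdf_cont.stronglyMeasurable.stronglyMeasurableAtFilter
      pdf_cont.continuousAt
  rw [hfun]
  exact ((hasDerivAt_const x (gaussQ 0)).sub hd).congr_deriv (by simp)

lemma Q_tendsto : Filter.Tendsto gaussQ Filter.atTop (nhds 0) := by
  have h := intervalIntegral_tendsto_integral_Ioi (μ := volume) 0
    (pdf_integrable.integrableOn) Filter.tendsto_id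
  have hQ0 : gaussQ 0 = ∫ t in Ioi (0:ℝ), stdNormalPdf t := integral_Ici_eq_integral_Ioi
  have : Filter.Tendsto (fun y => gaussQ 0 - ∫ t in (0:ℝ)..y, stdNormalPdf t)
      Filter.atTop (nhds (gaussQ 0 - gaussQ 0)) := by
    rw [hQ0]
    exact (tendsto_const_nhds.sub h)
  simp only [sub_self] at this
  convert this using 2 with y
  exact Q_sub 0 y

noncomputable def gfun (x : ℝ) : ℝ :=
  gaussQ x - (Real.sqrt (x ^ 2 + 4) - x) / 2 * stdNormalPdf x

lemma sqrt_pos4 (x : ℝ) : 0 < Real.sqrt (x ^ 2 + 4) :=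
  Real.sqrt_pos.mpr (by positivity)

lemma sqrt_sq4 (x : ℝ) : (Real.sqrt (x ^ 2 + 4)) ^ 2 = x ^ 2 + 4 :=
  Real.sq_sqrt (by positivity)

lemma sqrt_deriv (x : ℝ) :
    HasDerivAt (fun y : ℝ => Real.sqrt (y ^ 2 + 4)) (x / Real.sqrt (x ^ 2 + 4)) x := by
  have h1 : HasDerivAt (fun y : ℝ => y ^ 2 + 4) (2 * x) x := by
    simpa using (hasDerivAt_pow 2 x).add_const 4
  have h2 := (Real.hasDerivAt_sqrt (show x ^ 2 + 4 ≠ 0 by positivity)).comp x h1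
  refine h2.congr_deriv ?_
  field_simp

lemma key_ineq (x : ℝ) :
    x * (x ^ 2 + 3) < Real.sqrt (x ^ 2 + 4) * (x ^ 2 + 1) := by
  set s := Real.sqrt (x ^ 2 + 4) with hs
  have hsp := sqrt_pos4 x
  have hs2 := sqrt_sq4 x
  rcases le_or_gt x 0 with hx | hx
  · nlinarith
  · have h4 : (s * (x ^ 2 + 1)) ^ 2 = (x * (x ^ 2 + 3)) ^ 2 + 4 := by nlinarith
    nlinarith [mul_pos hx (show (0:ℝ) < x ^ 2 + 3 by positivity),
      mul_pos hsp (show (0:ℝ) < x ^ 2 + 1 by positivity)]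

lemma g_deriv_neg (x : ℝ) : deriv gfun x < 0 := by
  set s := Real.sqrt (x ^ 2 + 4) with hs
  have hsp := sqrt_pos4 x
  have hs2 := sqrt_sq4 x
  have hf := pdf_pos x
  have hs2' : s ^ 2 = x ^ 2 + 4 := sqrt_sq4 x
  have hkey' : x * (x ^ 2 + 3) < s * (x ^ 2 + 1) := key_ineq x
  have hd : HasDerivAt gfun
      (-(stdNormalPdf x) - ((x / s - 1) / 2 * stdNormalPdf x
        + (s - x) / 2 * (-x * stdNormalPdf x))) x := by
    have h1 : HasDerivAt (fun y : ℝ => (Real.sqrt (y ^ 2 + 4) - y) / 2)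
        ((x / s - 1) / 2) x := ((sqrt_deriv x).sub (hasDerivAt_id x)).div_const 2
    exact (Q_hasDeriv x).sub (h1.mul (pdf_hasDeriv x))
  rw [hd.deriv]
  have hkey := key_ineq x
  have hpos : 0 < 1 + x / s + x ^ 2 - x * s := by
    have h : (1 + x / s + x ^ 2 - x * s) * s = s * (x ^ 2 + 1) - x * (x ^ 2 + 3) := by
      have hsne : s ≠ 0 := hsp.ne'
      field_simp
      linear_combination (-x) * hs2'
    nlinarith [hkey', hsp, h]
  nlinarith [mul_pos hf hpos]

lemma g_tendsto : Filter.Tendsto gfun Filter.atTop (nhds 0) := by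
  have h1 : Filter.Tendsto
      (fun x : ℝ => (Real.sqrt (x ^ 2 + 4) - x) / 2 * stdNormalPdf x)
      Filter.atTop (nhds 0) := by
    have hbound : ∀ᶠ x : ℝ in Filter.atTop,
        (Real.sqrt (x ^ 2 + 4) - x) / 2 * stdNormalPdf x ≤ (Real.sqrt (2 * Real.pi))⁻¹ / x := by
      filter_upwards [Filter.eventually_gt_atTop (0:ℝ)] with x hx
      set s := Real.sqrt (x ^ 2 + 4) with hs
      have hsp := sqrt_pos4 x
      have hs2 := sqrt_sq4 x
      have hsx : x ≤ s := by nlinarith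
      have h1 : s - x = 4 / (s + x) := by
        rw [eq_div_iff (by positivity)]; nlinarith
      have h2 : (s - x) / 2 ≤ 1 / x := by
        rw [h1, div_div]
        rw [div_le_div_iff₀ (by positivity) hx]
        nlinarith
      have hfle : stdNormalPdf x ≤ (Real.sqrt (2 * Real.pi))⁻¹ := by
        unfold stdNormalPdf
        have : Real.exp (-x ^ 2 / 2) ≤ 1 := by
          rw [Real.exp_le_one_iff]; nlinarith
        nlinarith [Real.sqrt_pos.mpr (show (0:ℝ) < 2 * Real.pi by positivity), this,
          inv_pos.mpr (Real.sqrt_pos.mpr (show (0:ℝ) < 2 * Real.pi by positivity))]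
      calc (s - x) / 2 * stdNormalPdf x ≤ 1 / x * (Real.sqrt (2 * Real.pi))⁻¹ := by
            apply mul_le_mul h2 hfle (le_of_lt (pdf_pos x)) (by positivity)
        _ = (Real.sqrt (2 * Real.pi))⁻¹ / x := by ring
    have hbound0 : ∀ᶠ x : ℝ in Filter.atTop,
        (0:ℝ) ≤ (Real.sqrt (x ^ 2 + 4) - x) / 2 * stdNormalPdf x := by
      filter_upwards [Filter.eventually_gt_atTop (0:ℝ)] with x hx
      have hsx : x ≤ Real.sqrt (x ^ 2 + 4) := by
        nlinarith [sqrt_pos4 x, sqrt_sq4 x]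
      exact mul_nonneg (by linarith) (pdf_pos x).le
    have hlim : Filter.Tendsto (fun x : ℝ => (Real.sqrt (2 * Real.pi))⁻¹ / x)
        Filter.atTop (nhds 0) := tendsto_const_nhds.div_atTop Filter.tendsto_id
    exact tendsto_of_tendsto_of_tendsto_of_le_of_le' tendsto_const_nhds hlim hbound0 hbound
  have := Q_tendsto.sub h1
  rw [sub_zero] at this
  exact this

lemma g_pos (x : ℝ) : 0 < gfun x := by
  have hanti : StrictAnti gfun := strictAnti_of_deriv_neg g_deriv_neg
  have h1 : gfun (x + 1) < gfun x := hanti (by linarith)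
  have h2 : 0 ≤ gfun (x + 1) := hanti.antitone.le_of_tendsto g_tendsto (x + 1)
  linarith

theorem stmt3 (x : ℝ) :
    gaussQ x / (2 * stdNormalPdf x) > 1 / (x + Real.sqrt (x ^ 2 + 4)) := by
  set s := Real.sqrt (x ^ 2 + 4) with hs
  have hsp := sqrt_pos4 x
  have hs2 := sqrt_sq4 x
  have hf := pdf_pos x
  have hxs : 0 < x + s := by nlinarith [abs_nonneg x, sq_abs x, le_abs_self (-x)]
  have hg : (s - x) / 2 * stdNormalPdf x < gaussQ x := by
    have := g_pos x
    unfold gfun at this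
    linarith
  rw [gt_iff_lt, div_lt_div_iff₀ hxs (by positivity)]
  nlinarith [mul_pos hxs hf]
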